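/- Suppose I is an open interval of real numbers and U is a subgroup of Homeo⁺(I) that acts freely on I (every non-identity element of U has no fixed point in I). Then for every nonempty set S there exists a good U-anonymous S-predictor on I. -/

import Mathlib

open Set

theorem Equiv.Perm.apply_inv_self {α : Type*} (f : Equiv.Perm α) (x : α) : f (f⁻¹ x) = x :=
  f.apply_symm_apply x

theorem Equiv.Perm.inv_apply_self {α : Type*} (f : Equiv.Perm α) (x : α) : f⁻¹ (f x) = x :=
  f.symm_apply_apply x

section Aux
variable {α : Type*} [LinearOrder α] {S : Type*}

/-- pointwise positivity of a permutation -/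
def PPos (φ : Equiv.Perm α) : Prop := ∀ x, x < φ x
/-- pointwise strict order on permutations -/
def PLT (φ ψ : Equiv.Perm α) : Prop := ∀ x, φ x < ψ x
def PLE (φ ψ : Equiv.Perm α) : Prop := ∀ x, φ x ≤ ψ x

variable (U : Subgroup (Equiv.Perm α))

/-- the anonymity equivalence on pairs -/
def RelP (t : α) (F : α → S) (t' : α) (F' : α → S) : Prop :=
  ∃ φ ∈ U, φ t' = t ∧ ∀ x, x < t' → F' x = F (φ x)

/-- `(t,F)` has an equivalent pair above it (within the same total function) -/
def NonMaxP (t : α) (F : α → S) : Prop :=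
  ∃ ψ ∈ U, PPos ψ ∧ ∀ x, x < t → F (ψ x) = F x

def PhiP (t : α) (F : α → S) (v : S) : Prop :=
  ∃ t' F', RelP U t F t' F' ∧ NonMaxP U t' F' ∧ v = F' t'

def perClass (G : α → S) : Set (α → S) := {H | ∃ φ ∈ U, ∀ x, H x = G (φ x)}

def MatchCls (t : α) (F : α → S) : Set (Set (α → S)) :=
  {q | ∃ G, q = perClass U G ∧ ∀ x, x < t → G x = F x}

lemma mem_matchCls_self (t : α) (F : α → S) : perClass U F ∈ MatchCls U t F :=
  ⟨F, rfl, fun _ _ => rfl⟩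

noncomputable def Wcls (t : α) (F : α → S) : Set (α → S) :=
  WellFounded.min
    ((inferInstance : IsWellOrder (Set (α → S)) WellOrderingRel).toIsWellFounded.wf)
    (MatchCls U t F) ⟨perClass U F, mem_matchCls_self U t F⟩

def FBSet (t : α) (F : α → S) (v : S) : Prop :=
  ∃ G, perClass U G = Wcls U t F ∧ (∀ x, x < t → G x = F x) ∧ v = G t

lemma wcls_mem (t : α) (F : α → S) : Wcls U t F ∈ MatchCls U t F :=
  WellFounded.min_mem _ _ _

lemma fbne (t : α) (F : α → S) : ∃ v, FBSet U t F v := by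
  obtain ⟨G, hq, hm⟩ := wcls_mem U t F
  exact ⟨G t, G, hq.symm, hm, rfl⟩

noncomputable def Pred (t : α) (F : α → S) : S :=
  @dite _ (∃ v, PhiP U t F v) (Classical.propDecidable _)
    (fun h => h.choose) (fun _ => (fbne U t F).choose)

lemma Pred_pos {t : α} {F : α → S} (h : ∃ v, PhiP U t F v) :
    PhiP U t F (Pred U t F) := by
  unfold Pred
  rw [dif_pos h]
  exact h.choose_spec

lemma Pred_neg {t : α} {F : α → S} (h : ¬ ∃ v, PhiP U t F v) :
    FBSet U t F (Pred U t F) := by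
  unfold Pred
  rw [dif_neg h]
  exact (fbne U t F).choose_spec

lemma choose_eq {β : Type*} {p q : β → Prop} (h : p = q) (hp : ∃ v, p v) (hq : ∃ v, q v) :
    hp.choose = hq.choose := by subst h; rfl

lemma min_congr {β : Type*} {r : β → β → Prop} (wf : WellFounded r) {s s' : Set β}
    (h : s = s') (hne : s.Nonempty) (hne' : s'.Nonempty) :
    wf.min s hne = wf.min s' hne' := by subst h; rfl


section withMono
variable (hmono : ∀ φ ∈ U, StrictMono (⇑φ))

lemma relP_refl (t : α) (F : α → S) : RelP U t F t F :=
  ⟨1, one_mem U, rfl, fun _ _ => rfl⟩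

include hmono in
lemma relP_symm {t t' : α} {F F' : α → S} (h : RelP U t F t' F') : RelP U t' F' t F := by
  obtain ⟨φ, hφU, hφt, hφF⟩ := h
  refine ⟨φ⁻¹, inv_mem hφU, by rw [← hφt]; exact φ.inv_apply_self t', fun x hx => ?_⟩
  have hx' : φ⁻¹ x < t' := by
    have := (hmono _ (inv_mem hφU)) hx
    rwa [← hφt, φ.inv_apply_self] at this
  rw [hφF _ hx', φ.apply_inv_self]

include hmono in
lemma relP_trans {t t' t'' : α} {F F' F'' : α → S}
    (h1 : RelP U t F t' F') (h2 : RelP U t' F' t'' F'') : RelP U t F t'' F'' := by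
  obtain ⟨φ, hφU, hφt, hφF⟩ := h1
  obtain ⟨ψ, hψU, hψt, hψF⟩ := h2
  refine ⟨φ * ψ, mul_mem hφU hψU, by simp [Equiv.Perm.mul_apply, hψt, hφt], fun x hx => ?_⟩
  have hψx : ψ x < t' := by
    have := (hmono _ hψU) hx
    rwa [hψt] at this
  rw [hψF _ hx, hφF _ hψx]
  rfl

include hmono in
lemma phiP_inv {t t' : α} {F F' : α → S} (h : RelP U t F t' F') :
    PhiP U t F = PhiP U t' F' := by
  funext v
  apply propext
  constructor
  · rintro ⟨s, G, hr, hnm, rfl⟩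
    exact ⟨s, G, relP_trans U hmono (relP_symm U hmono h) hr, hnm, rfl⟩
  · rintro ⟨s, G, hr, hnm, rfl⟩
    exact ⟨s, G, relP_trans U hmono h hr, hnm, rfl⟩

omit [LinearOrder α] in
lemma mem_perClass_self (G : α → S) : G ∈ perClass U G :=
  ⟨1, one_mem U, fun _ => rfl⟩

omit [LinearOrder α] in
lemma perClass_eq_exists {G G'' : α → S} (h : perClass U G = perClass U G'') :
    ∃ χ ∈ U, ∀ x, G'' x = G (χ x) := by
  have : G'' ∈ perClass U G := h ▸ mem_perClass_self U G''
  exact this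

omit [LinearOrder α] in
lemma perClass_comp (G : α → S) {φ : Equiv.Perm α} (hφ : φ ∈ U) :
    perClass U (fun x => G (φ x)) = perClass U G := by
  ext H
  constructor
  · rintro ⟨χ, hχ, hH⟩
    exact ⟨φ * χ, mul_mem hφ hχ, fun x => by rw [hH x]; rfl⟩
  · rintro ⟨χ, hχ, hH⟩
    refine ⟨φ⁻¹ * χ, mul_mem (inv_mem hφ) hχ, fun x => ?_⟩
    rw [hH x]
    simp [Equiv.Perm.mul_apply]

include hmono in
lemma matchCls_inv {t t' : α} {F F' : α → S} (h : RelP U t F t' F') :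
    MatchCls U t F = MatchCls U t' F' := by
  obtain ⟨φ, hφU, hφt, hφF⟩ := h
  ext q
  constructor
  · rintro ⟨G, rfl, hm⟩
    refine ⟨fun x => G (φ x), (perClass_comp U G hφU).symm, fun x hx => ?_⟩
    have : φ x < t := by rw [← hφt]; exact (hmono _ hφU) hx
    show G (φ x) = F' x
    rw [hm _ this, ← hφF _ hx]
  · rintro ⟨G, rfl, hm⟩
    refine ⟨fun x => G (φ⁻¹ x), ?_, fun x hx => ?_⟩
    · rw [perClass_comp U G (inv_mem hφU)]
    · have hx' : φ⁻¹ x < t' := by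
        have := (hmono _ (inv_mem hφU)) hx
        rwa [← hφt, φ.inv_apply_self] at this
      show G (φ⁻¹ x) = F x
      rw [hm _ hx', hφF _ hx', φ.apply_inv_self]

include hmono in
lemma wcls_inv {t t' : α} {F F' : α → S} (h : RelP U t F t' F') :
    Wcls U t F = Wcls U t' F' :=
  min_congr _ (matchCls_inv U hmono h) _ _

include hmono in
lemma fbSet_inv {t t' : α} {F F' : α → S} (h : RelP U t F t' F') :
    FBSet U t F = FBSet U t' F' := by
  have hW := wcls_inv U hmono h
  obtain ⟨φ, hφU, hφt, hφF⟩ := h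
  funext v
  apply propext
  constructor
  · rintro ⟨G, hq, hm, rfl⟩
    refine ⟨fun x => G (φ x), by rw [perClass_comp U G hφU, hq, hW], fun x hx => ?_, by show G t = G (φ t'); rw [hφt]⟩
    have : φ x < t := by rw [← hφt]; exact (hmono _ hφU) hx
    show G (φ x) = F' x
    rw [hm _ this, ← hφF _ hx]
  · rintro ⟨G, hq, hm, rfl⟩
    refine ⟨fun x => G (φ⁻¹ x), by rw [perClass_comp U G (inv_mem hφU), hq, hW], fun x hx => ?_, ?_⟩
    · have hx' : φ⁻¹ x < t' := by
        have := (hmono _ (inv_mem hφU)) hx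
        rwa [← hφt, φ.inv_apply_self] at this
      show G (φ⁻¹ x) = F x
      rw [hm _ hx', hφF _ hx', φ.apply_inv_self]
    · show G t' = G (φ⁻¹ t)
      rw [← hφt, φ.inv_apply_self]

include hmono in
lemma pred_inv {t t' : α} {F F' : α → S} (h : RelP U t F t' F') :
    Pred U t F = Pred U t' F' := by
  have hΦ := phiP_inv U hmono h
  have hFB := fbSet_inv U hmono h
  unfold Pred
  by_cases h1 : ∃ v, PhiP U t F v
  · have h2 : ∃ v, PhiP U t' F' v := by rw [← hΦ]; exact h1
    rw [dif_pos h1, dif_pos h2]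
    exact choose_eq hΦ h1 h2
  · have h2 : ¬ ∃ v, PhiP U t' F' v := by rw [← hΦ]; exact h1
    rw [dif_neg h1, dif_neg h2]
    exact choose_eq hFB _ _

end withMono

section holder
variable (hmono : ∀ φ ∈ U, StrictMono (⇑φ))

omit [LinearOrder α] in
lemma perm_mul_apply (φ ψ : Equiv.Perm α) (x : α) : (φ * ψ) x = φ (ψ x) := rfl

lemma ppos_inv_lt {φ : Equiv.Perm α} (h : PPos φ) (x : α) : φ⁻¹ x < x := by
  have := h (φ⁻¹ x); rwa [φ.apply_inv_self] at this

lemma pneg_ppos_inv {φ : Equiv.Perm α} (h : ∀ x, φ x < x) : PPos φ⁻¹ := by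
  intro x
  have := h (φ⁻¹ x); rwa [φ.apply_inv_self] at this

lemma ppos_inv_pneg {φ : Equiv.Perm α} (h : PPos φ⁻¹) : ∀ x, φ x < x := by
  intro x
  have := h (φ x)
  rwa [φ.inv_apply_self] at this

variable (hdic : ∀ φ ∈ U, φ ≠ 1 → PPos φ ∨ PPos φ⁻¹)

include hdic in
lemma tri {φ ψ : Equiv.Perm α} (hφ : φ ∈ U) (hψ : ψ ∈ U) :
    PLT φ ψ ∨ φ = ψ ∨ PLT ψ φ := by
  rcases eq_or_ne (ψ * φ⁻¹) 1 with h1 | h1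
  · right; left
    have := mul_inv_eq_one.mp h1
    exact this.symm
  rcases hdic _ (mul_mem hψ (inv_mem hφ)) h1 with hp | hp
  · left
    intro x
    have := hp (φ x)
    rwa [perm_mul_apply, φ.inv_apply_self] at this
  · right; right
    intro x
    have := ppos_inv_pneg hp (φ x)
    rwa [perm_mul_apply, φ.inv_apply_self] at this

include hmono in
lemma le_pow {h : Equiv.Perm α} (hU : h ∈ U) (hp : PPos h) (n : ℕ) (x : α) :
    x ≤ (h ^ n) x := by
  induction n with
  | zero => simp
  | succ k ih =>
    have h1 : x ≤ (h ^ k) x := ih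
    have h2 : (h ^ k) x ≤ (h ^ k) (h x) :=
      ((hmono _ (pow_mem hU k)).monotone (le_of_lt (hp x)))
    calc x ≤ (h ^ k) x := h1
      _ ≤ (h ^ k) (h x) := h2
      _ = (h ^ (k+1)) x := by rw [pow_succ, perm_mul_apply]

include hmono hdic in
lemma ladder [Nonempty α]
    (harch : ∀ g ∈ U, ∀ h ∈ U, PPos h → ∃ n : ℕ, PLT g (h ^ n))
    {a h : Equiv.Perm α} (haU : a ∈ U) (hhU : h ∈ U) (hpa : PPos a) (hph : PPos h) :
    ∃ m : ℕ, PLE (h ^ m) a ∧ PLT a (h ^ (m+1)) := by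
  classical
  obtain ⟨N, hN⟩ := harch a haU h hhU hph
  set P : ℕ → Prop := fun k => PLE (h ^ k) a with hP
  have hP0 : P 0 := by intro x; simp [le_of_lt (hpa x)]
  have hbound : ∀ k, P k → k < N := by
    intro k hk
    rcases lt_or_ge k N with h' | hkN
    · exact h'
    exfalso
    have h1 : ∀ x, (h ^ N) x ≤ (h ^ k) x := by
      intro x
      have heq : (h ^ k) x = (h ^ N) ((h ^ (k - N)) x) := by
        rw [← perm_mul_apply, ← pow_add]
        congr 2
        omega
      rw [heq]
      exact (hmono _ (pow_mem hhU N)).monotone (le_pow U hmono hhU hph (k-N) _)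
    obtain x₀ : α := Classical.arbitrary α
    have := lt_of_lt_of_le (hN x₀) (le_trans (h1 x₀) (hk x₀))
    exact lt_irrefl _ this
  set m := Nat.findGreatest P N with hm
  have hPm : P m := Nat.findGreatest_spec (Nat.zero_le _) hP0
  refine ⟨m, hPm, ?_⟩
  rcases tri U hdic haU (pow_mem hhU (m+1)) with ht | ht | ht
  · exact ht
  · exfalso
    have hPm1 : P (m+1) := by intro x; rw [← ht]
    have h1 : m + 1 ≤ N := le_of_lt (hbound _ hPm1)
    exact Nat.findGreatest_is_greatest (Nat.lt_succ_self m) h1 hPm1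
  · exfalso
    have hPm1 : P (m+1) := fun x => le_of_lt (ht x)
    have h1 : m + 1 ≤ N := le_of_lt (hbound _ hPm1)
    exact Nat.findGreatest_is_greatest (Nat.lt_succ_self m) h1 hPm1

include hmono hdic in
lemma comm_aux [Nonempty α]
    (harch : ∀ g ∈ U, ∀ h ∈ U, PPos h → ∃ n : ℕ, PLT g (h ^ n))
    {a b : Equiv.Perm α} (haU : a ∈ U) (hbU : b ∈ U) (hpa : PPos a) (hpb : PPos b)
    (hc : PPos ((a*b)*(b*a)⁻¹)) : False := by
  classical
  obtain x₀ : α := Classical.arbitrary α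
  set c : Equiv.Perm α := (a*b)*(b*a)⁻¹ with hcdef
  have hcU : c ∈ U := mul_mem (mul_mem haU hbU) (inv_mem (mul_mem hbU haU))
  -- step 1 : find h with h*h ≤ c pointwise
  have step1 : ∃ h ∈ U, PPos h ∧ PLE (h*h) c := by
    by_cases hk : ∃ k ∈ U, PPos k ∧ PLT k c
    · obtain ⟨k, hkU, hkp, hkc⟩ := hk
      rcases tri U hdic (mul_mem hcU (inv_mem hkU)) hkU with h2 | h2 | h2
      · -- c * k⁻¹ < k
        refine ⟨c * k⁻¹, mul_mem hcU (inv_mem hkU), ?_, ?_⟩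
        · have hne : c * k⁻¹ ≠ 1 := by
            intro h3
            have : c = k := mul_inv_eq_one.mp h3
            exact lt_irrefl _ (this ▸ hkc x₀)
          rcases hdic _ (mul_mem hcU (inv_mem hkU)) hne with h3 | h3
          · exact h3
          · exfalso
            have h4 : ∀ x, c x < k x := by
              intro x
              have := ppos_inv_pneg h3 (k x)
              rwa [perm_mul_apply, k.inv_apply_self] at this
            exact lt_irrefl _ (lt_trans (hkc x₀) (h4 x₀))
        · intro x
          have h5 : (c * k⁻¹) ((c * k⁻¹) x) ≤ (c * k⁻¹) (k x) :=
            (hmono _ (mul_mem hcU (inv_mem hkU))).monotone (le_of_lt (h2 x))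
          calc ((c*k⁻¹) * (c*k⁻¹)) x = (c * k⁻¹) ((c * k⁻¹) x) := rfl
            _ ≤ (c * k⁻¹) (k x) := h5
            _ = c (k⁻¹ (k x)) := rfl
            _ = c x := by rw [k.inv_apply_self]
      · -- c * k⁻¹ = k hence k*k = c
        refine ⟨k, hkU, hkp, ?_⟩
        intro x
        have h3 : k * k = c := by
          nth_rewrite 1 [← h2]
          group
        rw [h3]
      · -- k < c * k⁻¹
        refine ⟨k, hkU, hkp, ?_⟩
        intro x
        have h5 : k (k x) ≤ (c * k⁻¹) (k x) := le_of_lt (h2 (k x))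
        calc (k * k) x = k (k x) := rfl
          _ ≤ (c * k⁻¹) (k x) := h5
          _ = c (k⁻¹ (k x)) := rfl
          _ = c x := by rw [k.inv_apply_self]
    · -- no positive element below c : c is the least positive element
      push_neg at hk
      have hmin : ∀ k ∈ U, PPos k → PLE c k := by
        intro k hkU hkp
        rcases tri U hdic hcU hkU with h2 | h2 | h2
        · exact fun x => le_of_lt (h2 x)
        · exact h2 ▸ fun x => le_refl _
        · exact absurd h2 (hk k hkU hkp)
      have hpow : ∀ g ∈ U, PPos g → ∃ m : ℕ, g = c ^ m := by
        intro g hgU hgp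
        obtain ⟨m, hm1, hm2⟩ := ladder U hmono hdic harch hgU hcU hgp hc
        refine ⟨m, ?_⟩
        set d : Equiv.Perm α := g * (c ^ m)⁻¹ with hd
        rcases eq_or_ne d 1 with h3 | h3
        · have := mul_inv_eq_one.mp h3
          exact this
        rcases hdic _ (mul_mem hgU (inv_mem (pow_mem hcU m))) h3 with h4 | h4
        · exfalso
          have hdU : d ∈ U := mul_mem hgU (inv_mem (pow_mem hcU m))
          have h5 : PLE c d := hmin d hdU h4
          have h6 : ∀ x, d x < c x := by
            intro x
            have h7 : d x = g ((c ^ m)⁻¹ x) := rfl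
            have h8 : g ((c ^ m)⁻¹ x) < (c ^ (m+1)) ((c ^ m)⁻¹ x) := hm2 _
            have h9 : (c ^ (m+1)) ((c ^ m)⁻¹ x) = c x := by
              rw [← perm_mul_apply]
              congr 1
              rw [pow_succ']
              group
            rw [h7, ← h9]
            exact h8
          exact lt_irrefl _ (lt_of_le_of_lt (h5 x₀) (h6 x₀))
        · exfalso
          have h6 : ∀ x, x < (c ^ m) (g⁻¹ x) := by
            intro x
            have := h4 x
            have h7 : d⁻¹ = c ^ m * g⁻¹ := by rw [hd]; group
            rw [h7] at this
            exact this
          have := h6 (g x₀)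
          rw [g.inv_apply_self] at this
          exact lt_irrefl _ (lt_of_lt_of_le this (hm1 x₀))
      obtain ⟨m, hma⟩ := hpow a haU hpa
      obtain ⟨n, hnb⟩ := hpow b hbU hpb
      exfalso
      have : c = 1 := by
        rw [hcdef, hma, hnb, ← pow_add, ← pow_add, Nat.add_comm]
        group
      rw [this] at hc
      exact lt_irrefl _ (hc x₀)
  obtain ⟨h, hhU, hph, hhc⟩ := step1
  obtain ⟨m, hm1, hm2⟩ := ladder U hmono hdic harch haU hhU hpa hph
  obtain ⟨n, hn1, hn2⟩ := ladder U hmono hdic harch hbU hhU hpb hph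
  -- key estimate : c y < (h*h) y for all y
  have hpoweq : h ^ (m+1) * h ^ (n+1) = (h*h) * h ^ (m+n) := by
    rw [← pow_add, show h * h = h ^ 2 from (sq h) ▸ rfl, ← pow_add]
    congr 1
    omega
  have hpoweq2 : h ^ (m+n) = h ^ n * h ^ m := by
    rw [← pow_add]
    congr 1
    omega
  have key : ∀ y, c y < (h*h) y := by
    intro y
    have e2 : ∀ w : α, a (b w) < (h ^ (m+1)) (b w) := fun w => hm2 _
    have e3 : ∀ w : α, (h ^ (m+1)) (b w) < (h ^ (m+1)) ((h ^ (n+1)) w) :=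
      fun w => (hmono _ (pow_mem hhU (m+1))) (hn2 w)
    have e4 : ∀ w : α, (h ^ (m+1)) ((h ^ (n+1)) w) = (h*h) ((h ^ (m+n)) w) := by
      intro w
      calc (h ^ (m+1)) ((h ^ (n+1)) w) = (h ^ (m+1) * h ^ (n+1)) w := rfl
        _ = ((h*h) * h ^ (m+n)) w := by rw [hpoweq]
        _ = (h*h) ((h ^ (m+n)) w) := rfl
    have e5 : (h ^ (m+n)) ((b*a)⁻¹ y) ≤ y := by
      have e6 : ∀ w : α, (h ^ (m+n)) w ≤ (b*a) w := by
        intro w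
        calc (h ^ (m+n)) w = (h ^ n) ((h ^ m) w) := by rw [hpoweq2]; rfl
          _ ≤ (h ^ n) (a w) := (hmono _ (pow_mem hhU n)).monotone (hm1 w)
          _ ≤ b (a w) := hn1 _
          _ = (b*a) w := rfl
      have := e6 ((b*a)⁻¹ y)
      rwa [Equiv.Perm.apply_inv_self] at this
    have e7 : (h*h) ((h ^ (m+n)) ((b*a)⁻¹ y)) ≤ (h*h) y :=
      (hmono _ (mul_mem hhU hhU)).monotone e5
    calc c y = a (b ((b*a)⁻¹ y)) := rfl
      _ < (h ^ (m+1)) (b ((b*a)⁻¹ y)) := e2 _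
      _ < (h ^ (m+1)) ((h ^ (n+1)) ((b*a)⁻¹ y)) := e3 _
      _ = (h*h) ((h ^ (m+n)) ((b*a)⁻¹ y)) := e4 _
      _ ≤ (h*h) y := e7
  exact lt_irrefl _ (lt_of_le_of_lt (hhc x₀) (key x₀))

include hmono hdic in
lemma comm_all [Nonempty α]
    (harch : ∀ g ∈ U, ∀ h ∈ U, PPos h → ∃ n : ℕ, PLT g (h ^ n))
    {a b : Equiv.Perm α} (haU : a ∈ U) (hbU : b ∈ U) : Commute a b := by
  have main : ∀ x ∈ U, ∀ y ∈ U, PPos x → PPos y → Commute x y := by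
    intro x hxU y hyU hpx hpy
    rcases eq_or_ne ((x*y)*(y*x)⁻¹) 1 with h1 | h1
    · exact mul_inv_eq_one.mp h1
    rcases hdic _ (mul_mem (mul_mem hxU hyU) (inv_mem (mul_mem hyU hxU))) h1 with h2 | h2
    · exact absurd h2 (fun h3 => comm_aux U hmono hdic harch hxU hyU hpx hpy h3)
    · exfalso
      have h3 : ((x*y)*(y*x)⁻¹)⁻¹ = (y*x)*(x*y)⁻¹ := by group
      rw [h3] at h2
      exact comm_aux U hmono hdic harch hyU hxU hpy hpx h2
  have posb : ∀ x ∈ U, PPos x → ∀ y ∈ U, Commute x y := by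
    intro x hxU hpx y hyU
    rcases eq_or_ne y 1 with rfl | hy1
    · exact Commute.one_right x
    rcases hdic _ hyU hy1 with h2 | h2
    · exact main x hxU y hyU hpx h2
    · have := main x hxU y⁻¹ (inv_mem hyU) hpx h2
      exact (Commute.inv_right_iff).mp this
  rcases eq_or_ne a 1 with rfl | ha1
  · exact Commute.one_left b
  rcases hdic _ haU ha1 with h2 | h2
  · exact posb a haU h2 b hbU
  · have := posb a⁻¹ (inv_mem haU) h2 b hbU
    exact (Commute.inv_left_iff).mp this

end holder

section correct
variable (hmono : ∀ φ ∈ U, StrictMono (⇑φ))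
variable (hcomm : ∀ a ∈ U, ∀ b ∈ U, a * b = b * a)

include hmono in
lemma conj_ppos {φ ψ : Equiv.Perm α} (hφ : φ ∈ U) (hψp : PPos ψ) :
    PPos (φ * ψ * φ⁻¹) := by
  intro x
  have h1 : φ⁻¹ x < ψ (φ⁻¹ x) := hψp _
  have h2 : φ (φ⁻¹ x) < φ (ψ (φ⁻¹ x)) := (hmono _ hφ) h1
  rwa [φ.apply_inv_self] at h2

include hmono hcomm in
lemma uniq' {t1 t2 : α} {F1 F2 : α → S} (h : RelP U t1 F1 t2 F2)
    (hnm1 : NonMaxP U t1 F1) (hnm2 : NonMaxP U t2 F2) : F1 t1 = F2 t2 := by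
  obtain ⟨φ, hφU, hφt, hφF⟩ := h
  obtain ⟨ψ1, hψ1U, hψ1p, hψ1F⟩ := hnm1
  obtain ⟨ψ2, hψ2U, hψ2p, hψ2F⟩ := hnm2
  set ρ : Equiv.Perm α := φ * ψ2 * φ⁻¹ with hρ
  have hρU : ρ ∈ U := mul_mem (mul_mem hφU hψ2U) (inv_mem hφU)
  have hρp : PPos ρ := conj_ppos U hmono hφU hψ2p
  have hainv : ρ⁻¹ t1 = φ (ψ2⁻¹ t2) := by
    rw [hρ]
    have : (φ * ψ2 * φ⁻¹)⁻¹ t1 = φ (ψ2⁻¹ (φ⁻¹ t1)) := by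
      simp [Equiv.Perm.mul_apply, mul_inv_rev]
    rw [this, ← hφt, φ.inv_apply_self]
  have hK : ∀ x, x < ρ⁻¹ t1 → F1 (ρ x) = F1 x := by
    intro x hx
    rw [hainv] at hx
    have hy : φ⁻¹ x < ψ2⁻¹ t2 := by
      have := (hmono _ (inv_mem hφU)) hx
      rwa [φ.inv_apply_self] at this
    have hy2 : ψ2 (φ⁻¹ x) < t2 := by
      have := (hmono _ hψ2U) hy
      rwa [ψ2.apply_inv_self] at this
    have hy3 : φ⁻¹ x < t2 := lt_trans hy (ppos_inv_lt hψ2p t2)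
    have hρx : ρ x = φ (ψ2 (φ⁻¹ x)) := rfl
    rw [hρx, ← hφF _ hy2, hψ2F _ hy3, hφF _ hy3, φ.apply_inv_self]
  have hval : F2 t2 = F1 (ρ⁻¹ t1) := by
    have h1 : F2 t2 = F2 (ψ2⁻¹ t2) := by
      have := hψ2F (ψ2⁻¹ t2) (ppos_inv_lt hψ2p t2)
      rwa [ψ2.apply_inv_self] at this
    rw [h1, hφF _ (ppos_inv_lt hψ2p t2), ← hainv]
  -- core, using commutativity
  have halt : ρ⁻¹ t1 < t1 := ppos_inv_lt hρp t1
  have hu1 : ψ1⁻¹ (ρ⁻¹ t1) < ρ⁻¹ t1 := ppos_inv_lt hψ1p _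
  have hu2 : ψ1⁻¹ (ρ⁻¹ t1) < t1 := lt_trans hu1 halt
  have c1 : F1 (ρ⁻¹ t1) = F1 (ψ1⁻¹ (ρ⁻¹ t1)) := by
    have := hψ1F (ψ1⁻¹ (ρ⁻¹ t1)) hu2
    rwa [ψ1.apply_inv_self] at this
  have c2 : F1 (ρ (ψ1⁻¹ (ρ⁻¹ t1))) = F1 (ψ1⁻¹ (ρ⁻¹ t1)) := hK _ hu1
  have c3 : ρ (ψ1⁻¹ (ρ⁻¹ t1)) = ψ1⁻¹ t1 := by
    have hcom : Commute ρ ψ1 := hcomm _ hρU _ hψ1U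
    have hcom2 : ρ * ψ1⁻¹ = ψ1⁻¹ * ρ := hcom.inv_right
    calc ρ (ψ1⁻¹ (ρ⁻¹ t1)) = (ρ * ψ1⁻¹) (ρ⁻¹ t1) := rfl
      _ = (ψ1⁻¹ * ρ) (ρ⁻¹ t1) := by rw [hcom2]
      _ = ψ1⁻¹ (ρ (ρ⁻¹ t1)) := rfl
      _ = ψ1⁻¹ t1 := by rw [Equiv.Perm.apply_inv_self]
  have c4 : F1 t1 = F1 (ψ1⁻¹ t1) := by
    have := hψ1F (ψ1⁻¹ t1) (ppos_inv_lt hψ1p t1)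
    rwa [ψ1.apply_inv_self] at this
  rw [hval, c1, ← c2, c3, ← c4]

include hmono hcomm in
lemma uniq {t : α} {F : α → S} {v v' : S}
    (h : PhiP U t F v) (h' : PhiP U t F v') : v = v' := by
  obtain ⟨t1, F1, hr1, hnm1, rfl⟩ := h
  obtain ⟨t2, F2, hr2, hnm2, rfl⟩ := h'
  exact uniq' U hmono hcomm (relP_trans U hmono (relP_symm U hmono hr1) hr2) hnm1 hnm2

lemma phiP_self {t : α} {F : α → S} (h : NonMaxP U t F) : PhiP U t F (F t) :=
  ⟨t, F, relP_refl U t F, h, rfl⟩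

include hmono in
lemma transport {t : α} {F : α → S} (h : ∃ v, PhiP U t F v) :
    ∃ ρ ∈ U, PPos ρ ∧ ∀ x, x < ρ⁻¹ t → F (ρ x) = F x := by
  obtain ⟨v, t1, F1, ⟨φ, hφU, hφt, hφF⟩, ⟨ψ, hψU, hψp, hψF⟩, rfl⟩ := h
  set ρ : Equiv.Perm α := φ * ψ * φ⁻¹ with hρ
  have hρU : ρ ∈ U := mul_mem (mul_mem hφU hψU) (inv_mem hφU)
  have hρp : PPos ρ := conj_ppos U hmono hφU hψp
  refine ⟨ρ, hρU, hρp, ?_⟩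
  have hainv : ρ⁻¹ t = φ (ψ⁻¹ t1) := by
    rw [hρ]
    have : (φ * ψ * φ⁻¹)⁻¹ t = φ (ψ⁻¹ (φ⁻¹ t)) := by
      simp [Equiv.Perm.mul_apply, mul_inv_rev]
    rw [this, ← hφt, φ.inv_apply_self]
  intro x hx
  rw [hainv] at hx
  have hy : φ⁻¹ x < ψ⁻¹ t1 := by
    have := (hmono _ (inv_mem hφU)) hx
    rwa [φ.inv_apply_self] at this
  have hy2 : ψ (φ⁻¹ x) < t1 := by
    have := (hmono _ hψU) hy
    rwa [ψ.apply_inv_self] at this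
  have hy3 : φ⁻¹ x < t1 := lt_trans hy (ppos_inv_lt hψp t1)
  have hρx : ρ x = φ (ψ (φ⁻¹ x)) := rfl
  rw [hρx, ← hφF _ hy2, hψF _ hy3, hφF _ hy3, φ.apply_inv_self]

include hmono hcomm in
lemma pred_correct_of_phi {t : α} {F : α → S} (h : ∃ v, PhiP U t F v)
    (hself : PhiP U t F (F t)) : Pred U t F = F t :=
  uniq U hmono hcomm (Pred_pos U h) hself

include hmono hcomm in
lemma good3 {t t'' : α} {F : α → S} (hlt : t < t'') (h : ∃ v, PhiP U t'' F v) :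
    Pred U t F = F t := by
  obtain ⟨ρ, hρU, hρp, hρF⟩ := transport U hmono h
  have h1 : ρ⁻¹ t < ρ⁻¹ t'' := (hmono _ (inv_mem hρU)) hlt
  have hFt : F t = F (ρ⁻¹ t) := by
    have := hρF (ρ⁻¹ t) h1
    rwa [Equiv.Perm.apply_inv_self] at this
  have hphi : PhiP U t F (F (ρ⁻¹ t)) := by
    refine ⟨ρ⁻¹ t, F, ⟨ρ, hρU, Equiv.Perm.apply_inv_self _ _, fun x hx => (hρF x (lt_trans hx h1)).symm⟩,
      ⟨ρ, hρU, hρp, fun x hx => hρF x (lt_trans hx h1)⟩, rfl⟩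
  have := pred_correct_of_phi U hmono hcomm ⟨_, hphi⟩ (hFt ▸ hphi)
  exact this

lemma matchCls_anti {t t'' : α} {F : α → S} (h : t < t'') :
    MatchCls U t'' F ⊆ MatchCls U t F := by
  rintro q ⟨G, rfl, hm⟩
  exact ⟨G, rfl, fun x hx => hm x (lt_trans hx h)⟩

lemma wcls_not_lt {t t'' : α} {F : α → S} (h : t < t'') :
    ¬ WellOrderingRel (Wcls U t'' F) (Wcls U t F) :=
  WellFounded.not_lt_min _ _ (matchCls_anti U h (wcls_mem U t'' F))

include hmono in
lemma g4_strict (hdic : ∀ φ ∈ U, φ ≠ 1 → PPos φ ∨ PPos φ⁻¹)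
    {t t'' : α} {F : α → S} (hlt : t < t'')
    (hnp : ¬ ∃ v, PhiP U t F v) (hnp'' : ¬ ∃ v, PhiP U t'' F v)
    (herr : Pred U t F ≠ F t) : Wcls U t F ≠ Wcls U t'' F := by
  intro hW
  obtain ⟨G, hGq, hGm, hGv⟩ := Pred_neg U hnp
  obtain ⟨G'', hq'', hm''⟩ := wcls_mem U t'' F
  have hpc : perClass U G = perClass U G'' := by
    rw [hGq, hW, hq'']
  obtain ⟨χ, hχU, hχ⟩ := perClass_eq_exists U hpc
  rcases eq_or_ne χ 1 with rfl | hχ1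
  · apply herr
    rw [hGv]
    have : G t = G'' t := by rw [hχ t]; rfl
    rw [this, hm'' t hlt]
  rcases hdic _ hχU hχ1 with hp | hp
  · -- χ positive
    apply hnp
    have hkey : ∀ x, x < χ⁻¹ t → F (χ x) = F x := by
      intro x hx
      have hχx : χ x < t := by
        have := (hmono _ hχU) hx
        rwa [χ.apply_inv_self] at this
      have h1 : G (χ x) = F (χ x) := hGm _ hχx
      have h2 : G'' x = F x := hm'' x (lt_trans (lt_trans hx (ppos_inv_lt hp t)) hlt)
      rw [← h1, ← hχ x, h2]
    refine ⟨F (χ⁻¹ t), χ⁻¹ t, F,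
      ⟨χ, hχU, Equiv.Perm.apply_inv_self _ _, fun x hx => (hkey x hx).symm⟩,
      ⟨χ, hχU, hp, hkey⟩, rfl⟩
  · -- χ negative
    have hkey : ∀ x, x < t → x < χ t'' → F (χ⁻¹ x) = F x := by
      intro x hx1 hx2
      have h1 : F x = G x := (hGm _ hx1).symm
      have h2 : G x = G'' (χ⁻¹ x) := by rw [hχ (χ⁻¹ x), χ.apply_inv_self]
      have h3 : χ⁻¹ x < t'' := by
        have := (hmono _ (inv_mem hχU)) hx2
        rwa [χ.inv_apply_self] at this
      rw [h1, h2, hm'' _ h3]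
    rcases le_or_gt t (χ t'') with hle | hgt
    · apply hnp
      have hnm : NonMaxP U t F :=
        ⟨χ⁻¹, inv_mem hχU, hp, fun x hx => hkey x hx (lt_of_lt_of_le hx hle)⟩
      exact ⟨F t, phiP_self U hnm⟩
    · apply hnp''
      have hnm : NonMaxP U (χ t'') F :=
        ⟨χ⁻¹, inv_mem hχU, hp, fun x hx => hkey x (lt_trans hx hgt) hx⟩
      refine ⟨F (χ t''), χ t'', F,
        ⟨χ⁻¹, inv_mem hχU, χ.inv_apply_self _, fun x hx => (hkey x (lt_trans hx hgt) hx).symm⟩,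
        hnm, rfl⟩

end correct
end Aux


lemma countable_aux {γ : Type*} {r : γ → γ → Prop} (hwf : WellFounded r) {A : Set ℝ}
    (g : ℝ → γ) (hg : ∀ a ∈ A, ∀ b ∈ A, a < b → r (g a) (g b)) : A.Countable := by
  classical
  have key : ∀ a : A, ∃ q : ℚ, (a:ℝ) < q ∧ ∀ b ∈ A, (a:ℝ) < b → (q:ℝ) ≤ b := by
    rintro ⟨a, ha⟩
    by_cases h : ∃ b ∈ A, a < b
    · obtain ⟨b1, hb1A, hb1⟩ := h
      set SA : Set ℝ := {b | b ∈ A ∧ a < b} with hSA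
      have hSAne : SA.Nonempty := ⟨b1, hb1A, hb1⟩
      have hgne : (g '' SA).Nonempty := hSAne.image g
      obtain ⟨b₀, hb₀S, hgb₀⟩ := hwf.min_mem (g '' SA) hgne
      have hleast : ∀ b ∈ SA, b₀ ≤ b := by
        intro b hb
        by_contra hlt
        push_neg at hlt
        have hr : r (g b) (g b₀) := hg b hb.1 b₀ hb₀S.1 hlt
        have : ¬ r (g b) (hwf.min (g '' SA) hgne) := hwf.not_lt_min (g '' SA) (x := g b) ⟨b, hb, rfl⟩
        rw [← hgb₀] at this
        exact this hr
      obtain ⟨q, hq1, hq2⟩ := exists_rat_btwn (show a < b₀ from hb₀S.2)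
      exact ⟨q, hq1, fun b hbA hab => le_trans (le_of_lt hq2) (hleast b ⟨hbA, hab⟩)⟩
    · obtain ⟨q, hq⟩ := exists_rat_gt a
      push_neg at h
      exact ⟨q, hq, fun b hbA hab => absurd hab (not_lt.mpr (h b hbA))⟩
  choose f hf1 hf2 using key
  have hinj : Function.Injective f := by
    intro a a' hff
    by_contra hne
    have hne' : (a:ℝ) ≠ (a':ℝ) := fun hh => hne (Subtype.ext hh)
    rcases lt_or_gt_of_ne hne' with hlt | hlt
    · have h1 : ((f a : ℚ) : ℝ) ≤ a' := hf2 a a' a'.2 hlt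
      have h2 : (a':ℝ) < ((f a' : ℚ) : ℝ) := hf1 a'
      rw [hff] at h1
      exact lt_irrefl _ (lt_of_le_of_lt h1 h2)
    · have h1 : ((f a' : ℚ) : ℝ) ≤ a := hf2 a' a a.2 hlt
      have h2 : (a:ℝ) < ((f a : ℚ) : ℝ) := hf1 a
      rw [hff] at h2
      exact lt_irrefl _ (lt_of_le_of_lt h1 h2)
  have : Countable ↥A := ⟨⟨fun a => Encodable.encode (f a), fun a a' h => hinj (Encodable.encode_injective h)⟩⟩
  exact Set.countable_coe_iff.mp this


open MeasureTheory Set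

/-- If `I` is an open interval of reals (open, order-connected, nonempty subset of `ℝ`) and
`U` is a subgroup of `Homeo⁺(I)` acting freely on `I` (no non-identity element has a fixed
point), then for every (nonempty) set `S` there is a good, `U`-anonymous `S`-predictor on `I`.
Increasing homeomorphisms of `I` are modelled as strictly monotone permutations of `I`.
A predictor is encoded as `P : I → (I → S) → S`, where `P t F` is the prediction from `F`
restricted to `{x ∈ I : x < t}` (so `P t` depends only on those values). -/
theorem stmt_4 (I : Set ℝ) (hIopen : IsOpen I) (hIconn : I.OrdConnected) (hIne : I.Nonempty)
    (U : Subgroup (Equiv.Perm I))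
    (hmono : ∀ φ ∈ U, StrictMono (⇑φ))
    (hfree : ∀ φ ∈ U, φ ≠ 1 → ∀ x : I, φ x ≠ x)
    (S : Type*) [Nonempty S] :
    ∃ P : I → (I → S) → S,
      (∀ (t : I) (F G : I → S), (∀ x : I, x < t → F x = G x) → P t F = P t G) ∧
      (∀ F : I → S,
        volume {t : ℝ | ∃ ht : t ∈ I, P ⟨t, ht⟩ F ≠ F ⟨t, ht⟩} = 0) ∧
      (∀ φ ∈ U, ∀ (t : I) (F : I → S), P t F = P (φ⁻¹ t) (F ∘ φ)) := by
  classical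
  haveI : Nonempty ↥I := hIne.to_subtype
  have no_cross : ∀ φ : Equiv.Perm ↥I, φ ∈ U → φ ≠ 1 →
      ∀ a b : ↥I, a < φ a → φ b < b → a < b → False := by
    intro φ hφU hφ1 a b ha hb hab
    set A : Set ℝ := Subtype.val '' {x : ↥I | x ∈ Set.Icc a b ∧ x < φ x} with hA
    have hamem : (a:ℝ) ∈ A := ⟨a, ⟨⟨le_refl a, le_of_lt hab⟩, ha⟩, rfl⟩
    have hane : A.Nonempty := ⟨(a:ℝ), hamem⟩
    have hbdd : BddAbove A := ⟨(b:ℝ), by rintro y ⟨x, ⟨⟨_, hx2⟩, _⟩, rfl⟩; exact_mod_cast hx2⟩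
    set c := sSup A with hc
    have hca : (a:ℝ) ≤ c := le_csSup hbdd hamem
    have hcb : c ≤ (b:ℝ) := csSup_le hane (by rintro y ⟨x, ⟨⟨_, hx2⟩, _⟩, rfl⟩; exact_mod_cast hx2)
    have hcI : c ∈ I := hIconn.out a.2 b.2 ⟨hca, hcb⟩
    set cc : ↥I := ⟨c, hcI⟩ with hcc
    have hle : ∀ x : ↥I, x ∈ Set.Icc a b → x < φ x → x ≤ cc := by
      intro x hx1 hx2
      have : (x:ℝ) ≤ c := le_csSup hbdd ⟨x, ⟨hx1, hx2⟩, rfl⟩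
      exact Subtype.coe_le_coe.mp this
    have hcub : cc ≤ φ cc := by
      have : c ≤ ((φ cc : ↥I) : ℝ) := csSup_le hane (by
        rintro y ⟨x, ⟨hx1, hx2⟩, rfl⟩
        have h1 : x ≤ cc := hle x hx1 hx2
        have h2 : φ x ≤ φ cc := (hmono _ hφU).monotone h1
        exact_mod_cast le_trans (le_of_lt hx2) h2)
      exact Subtype.coe_le_coe.mp this
    have hfix : φ cc ≠ cc := hfree φ hφU hφ1 cc
    have hcpos : cc < φ cc := lt_of_le_of_ne hcub (fun h => hfix h.symm)
    have hcltb : cc < b := by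
      rcases lt_or_eq_of_le (Subtype.coe_le_coe.mp hcb : cc ≤ b) with h | h
      · exact h
      · exfalso; rw [h] at hcpos; exact lt_irrefl _ (lt_trans hcpos hb)
    set y : ↥I := min (φ cc) b with hy
    have hcy : cc < y := lt_min hcpos hcltb
    have hymem : y ∈ Set.Icc a b := by
      constructor
      · exact le_of_lt (lt_of_le_of_lt (Subtype.coe_le_coe.mp hca : a ≤ cc) hcy)
      · exact min_le_right _ _
    have hyφ : y < φ y := by
      have h1 : y ≤ φ cc := min_le_left _ _
      have h2 : φ cc < φ y := (hmono _ hφU) hcy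
      exact lt_of_le_of_lt h1 h2
    exact absurd hcy (not_lt.mpr (hle y hymem hyφ))
  have hdic : ∀ φ ∈ U, φ ≠ 1 → PPos φ ∨ PPos φ⁻¹ := by
    intro φ hφU hφ1
    by_contra hcon
    push_neg at hcon
    obtain ⟨h1, h2⟩ := hcon
    rw [PPos] at h1 h2
    push_neg at h1 h2
    obtain ⟨b, hb⟩ := h1
    obtain ⟨z, hz⟩ := h2
    have hblt : φ b < b := lt_of_le_of_ne hb (hfree φ hφU hφ1 b)
    have hzlt : φ⁻¹ z < z := lt_of_le_of_ne hz (hfree φ⁻¹ (inv_mem hφU) (inv_ne_one.mpr hφ1) z)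
    have haφ : φ⁻¹ z < φ (φ⁻¹ z) := by rw [φ.apply_inv_self]; exact hzlt
    set a := φ⁻¹ z with ha
    rcases lt_trichotomy a b with h | h | h
    · exact no_cross φ hφU hφ1 a b haφ hblt h
    · rw [h] at haφ; exact lt_irrefl _ (lt_trans haφ hblt)
    · have h1' : (φ b) < φ⁻¹ (φ b) := by rw [φ.inv_apply_self]; exact hblt
      have h2' : φ⁻¹ (φ a) < (φ a) := by rw [φ.inv_apply_self]; exact haφ
      have h3' : φ b < φ a := (hmono _ hφU) h
      exact no_cross φ⁻¹ (inv_mem hφU) (inv_ne_one.mpr hφ1) (φ b) (φ a) h1' h2' h3'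
  have harch : ∀ g ∈ U, ∀ h ∈ U, PPos h → ∃ n : ℕ, PLT g (h ^ n) := by
    intro g hgU h hhU hp
    obtain ⟨x₀⟩ := (inferInstance : Nonempty ↥I)
    have hpoint : ∃ n : ℕ, g x₀ < (h ^ n) x₀ := by
      by_contra hcon
      push_neg at hcon
      set A : Set ℝ := Subtype.val '' (Set.range fun n : ℕ => (h ^ n) x₀) with hA
      have hane : A.Nonempty := ⟨(((h^0) x₀ : ↥I) : ℝ), ⟨(h^0) x₀, ⟨0, rfl⟩, rfl⟩⟩
      have hbdd : BddAbove A := ⟨(g x₀ : ℝ), by rintro zz ⟨w, ⟨n, rfl⟩, rfl⟩; exact_mod_cast hcon n⟩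
      set c := sSup A with hc
      have hc0 : (((h^0 : Equiv.Perm ↥I) x₀ : ↥I) : ℝ) ≤ c := le_csSup hbdd ⟨_, ⟨0, rfl⟩, rfl⟩
      have hx₀c : (x₀:ℝ) ≤ c := by simpa using hc0
      have hcg : c ≤ (g x₀ : ℝ) := csSup_le hane (by rintro zz ⟨w, ⟨n, rfl⟩, rfl⟩; exact_mod_cast hcon n)
      have hcI : c ∈ I := hIconn.out x₀.2 (g x₀).2 ⟨hx₀c, hcg⟩
      set cc : ↥I := ⟨c, hcI⟩ with hcc
      have hub : ∀ n : ℕ, (h^n) x₀ ≤ cc :=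
        fun n => Subtype.coe_le_coe.mp (le_csSup hbdd ⟨_, ⟨n, rfl⟩, rfl⟩)
      have hub2 : ∀ n : ℕ, (h^n) x₀ ≤ h⁻¹ cc := by
        intro n
        have h2 : h⁻¹ ((h^(n+1)) x₀) ≤ h⁻¹ cc := (hmono _ (inv_mem hhU)).monotone (hub (n+1))
        have h3 : h⁻¹ ((h^(n+1)) x₀) = (h^n) x₀ := by
          rw [pow_succ']
          simp [perm_mul_apply]
        rwa [h3] at h2
      have hcle : cc ≤ h⁻¹ cc := by
        have : c ≤ ((h⁻¹ cc : ↥I):ℝ) := csSup_le hane (by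
          rintro zz ⟨w, ⟨n, rfl⟩, rfl⟩; exact_mod_cast hub2 n)
        exact Subtype.coe_le_coe.mp this
      exact absurd hcle (not_le.mpr (ppos_inv_lt hp cc))
    obtain ⟨n, hn⟩ := hpoint
    rcases tri U hdic hgU (pow_mem hhU n) with ht | ht | ht
    · exact ⟨n, ht⟩
    · exfalso; rw [ht] at hn; exact lt_irrefl _ hn
    · exfalso; exact lt_irrefl _ (lt_trans hn (ht x₀))
  have hcomm : ∀ a ∈ U, ∀ b ∈ U, a * b = b * a :=
    fun a ha b hb => comm_all U hmono hdic harch ha hb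
  refine ⟨Pred U, ?_, ?_, ?_⟩
  · intro t F G h
    exact pred_inv U hmono ⟨1, one_mem U, rfl, fun x hx => (h x hx).symm⟩
  · intro F
    set E : Set ↥I := {x : ↥I | Pred U x F ≠ F x} with hE
    have hE₁ : {x : ↥I | x ∈ E ∧ ∃ v, PhiP U x F v}.Subsingleton := by
      intro x hx y hy
      by_contra hne
      rcases lt_or_gt_of_ne (show x ≠ y from hne) with hlt | hlt
      · exact hx.1 (good3 U hmono hcomm hlt hy.2)
      · exact hy.1 (good3 U hmono hcomm hlt hx.2)
    have hE₂ : {x : ↥I | x ∈ E ∧ ¬ ∃ v, PhiP U x F v}.Countable := by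
      set E₂ : Set ↥I := {x : ↥I | x ∈ E ∧ ¬ ∃ v, PhiP U x F v} with hE₂def
      set g : ℝ → Set (↥I → S) := fun x => if hx : x ∈ I then Wcls U ⟨x, hx⟩ F else ∅ with hg
      have hwf : WellFounded (WellOrderingRel (α := Set (↥I → S))) :=
        (inferInstance : IsWellOrder (Set (↥I → S)) WellOrderingRel).toIsWellFounded.wf
      have hstrict : ∀ a ∈ Subtype.val '' E₂, ∀ b ∈ Subtype.val '' E₂, a < b →
          WellOrderingRel (g a) (g b) := by
        rintro a ⟨xa, hxa, rfl⟩ b ⟨xb, hxb, rfl⟩ hab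
        have hab' : xa < xb := Subtype.coe_lt_coe.mp hab
        have hga : g ↑xa = Wcls U xa F := by rw [hg]; simp [dif_pos xa.2]
        have hgb : g ↑xb = Wcls U xb F := by rw [hg]; simp [dif_pos xb.2]
        rw [hga, hgb]
        have hne : Wcls U xa F ≠ Wcls U xb F :=
          g4_strict U hmono hdic hab' hxa.2 hxb.2 hxa.1
        have hnlt : ¬ WellOrderingRel (Wcls U xb F) (Wcls U xa F) := wcls_not_lt U hab'
        rcases trichotomous (r := WellOrderingRel) (Wcls U xa F) (Wcls U xb F) with h | h | h
        · exact h
        · exact absurd h hne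
        · exact absurd h hnlt
      have hAc : (Subtype.val '' E₂).Countable := countable_aux hwf g hstrict
      exact Set.countable_of_injective_of_countable_image (Subtype.val_injective.injOn) hAc
    have hEc : E.Countable := by
      have hsub : E ⊆ {x : ↥I | x ∈ E ∧ ∃ v, PhiP U x F v} ∪
          {x : ↥I | x ∈ E ∧ ¬ ∃ v, PhiP U x F v} := by
        intro x hx
        by_cases h : ∃ v, PhiP U x F v
        · exact Or.inl ⟨hx, h⟩
        · exact Or.inr ⟨hx, h⟩
      exact (Set.Countable.union hE₁.countable hE₂).mono hsub
    have hset : {t : ℝ | ∃ ht : t ∈ I, Pred U ⟨t, ht⟩ F ≠ F ⟨t, ht⟩} = Subtype.val '' E := by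
      ext t
      constructor
      · rintro ⟨ht, hne⟩
        exact ⟨⟨t, ht⟩, hne, rfl⟩
      · rintro ⟨⟨t', ht⟩, hne, rfl⟩
        exact ⟨ht, hne⟩
    rw [hset]
    exact (hEc.image _).measure_zero _
  · intro φ hφ t F
    exact pred_inv U hmono ⟨φ, hφ, Equiv.Perm.apply_inv_self φ t, fun x hx => rfl⟩
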